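/- For all t ∈ [0, T], one has ∫_t^T e^{−(2/α)·(A(s) − A(t))} ds = √(α/β)·(1 − (1 − u)·e^{−ω(T−t)} − u·e^{−2ω(T−t)})/(1 + u·e^{−2ω(T−t)}). -/

import Mathlib

/-- For all `t ∈ [0, T]`, one has
`∫_t^T e^{−(2/α)(A(s) − A(t))} ds = √(α/β)·(1 − (1−u)e^{−ω(T−t)} − u·e^{−2ω(T−t)})/(1 + u·e^{−2ω(T−t)})`. -/
theorem stmt_6 (α β γ T : ℝ) (hα : 0 < α) (hβ : 0 < β) (hγ : 0 < γ) (hT : 0 < T)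
    (ω u : ℝ) (hω : ω = Real.sqrt (β / α))
    (hu : u = (Real.sqrt (α * β) - γ) / (Real.sqrt (α * β) + γ))
    (y : ℝ → ℝ)
    (hy : ∀ t, y t = (Real.sqrt (α * β) / 2) *
      (1 - u * Real.exp (-2 * ω * (T - t))) / (1 + u * Real.exp (-2 * ω * (T - t))))
    (A : ℝ → ℝ) (hA : ∀ t, A t = -∫ s in t..T, y s) :
    ∀ t ∈ Set.Icc (0 : ℝ) T,
      (∫ s in t..T, Real.exp (-(2 / α) * (A s - A t))) =
        Real.sqrt (α / β) *
          (1 - (1 - u) * Real.exp (-ω * (T - t)) - u * Real.exp (-2 * ω * (T - t))) /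
          (1 + u * Real.exp (-2 * ω * (T - t))) := by
  intro t ht
  obtain ⟨ht0, htT⟩ := ht
  have hαβ : 0 < Real.sqrt (α * β) := Real.sqrt_pos.mpr (by positivity)
  have hωpos : 0 < ω := by
    rw [hω]; exact Real.sqrt_pos.mpr (by positivity)
  have hden0 : 0 < Real.sqrt (α * β) + γ := by linarith
  have hu1 : -1 < u := by
    rw [hu, lt_div_iff₀ hden0]; nlinarith
  have hu2 : u < 1 := by
    rw [hu, div_lt_one hden0]; linarith
  have hωeq : ω * α = Real.sqrt (α * β) := by
    rw [hω, ← Real.sqrt_sq hα.le, ← Real.sqrt_mul (by positivity)]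
    congr 1; field_simp; ring_nf; rw [Real.sq_sqrt (by positivity)]
  have hinv : Real.sqrt (α / β) = 1 / ω := by
    rw [eq_div_iff (ne_of_gt hωpos), hω, ← Real.sqrt_mul (by positivity),
      show α / β * (β / α) = 1 by field_simp, Real.sqrt_one]
  -- the auxiliary function h
  set h : ℝ → ℝ := fun s => Real.exp (ω * (T - s)) + u * Real.exp (-ω * (T - s)) with hhdef
  have hpos : ∀ s, s ≤ T → 0 < h s := by
    intro s hs
    have h1 : Real.exp (-ω * (T - s)) ≤ Real.exp (ω * (T - s)) :=
      Real.exp_le_exp.mpr (by nlinarith)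
    have h2 : 0 < Real.exp (-ω * (T - s)) := Real.exp_pos _
    have h3 : 0 < (1 + u) * Real.exp (-ω * (T - s)) := mul_pos (by linarith) h2
    simp only [hhdef]; nlinarith
  have hdenpos : ∀ s, s ≤ T → 0 < 1 + u * Real.exp (-2 * ω * (T - s)) := by
    intro s hs
    have h1 : Real.exp (-2 * ω * (T - s)) ≤ 1 := Real.exp_le_one_iff.mpr (by nlinarith)
    have h2 : 0 < Real.exp (-2 * ω * (T - s)) := Real.exp_pos _
    nlinarith
  -- continuity and integrability of y
  have hycont : ContinuousOn y (Set.Iic T) := by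
    have hc : ContinuousOn (fun s => (Real.sqrt (α * β) / 2) *
        (1 - u * Real.exp (-2 * ω * (T - s))) / (1 + u * Real.exp (-2 * ω * (T - s))))
        (Set.Iic T) := by
      apply ContinuousOn.div
      · exact (Continuous.continuousOn (by fun_prop))
      · exact (Continuous.continuousOn (by fun_prop))
      · exact fun s hs => ne_of_gt (hdenpos s hs)
    exact hc.congr (fun s _ => hy s)
  have hyint : ∀ a b : ℝ, a ≤ T → b ≤ T → IntervalIntegrable y MeasureTheory.volume a b := by
    intro a b ha hb
    apply (hycont.mono ?_).intervalIntegrable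
    intro x hx
    rcases le_total a b with hab | hab
    · rw [Set.uIcc_of_le hab] at hx; exact le_trans hx.2 hb
    · rw [Set.uIcc_of_ge hab] at hx; exact le_trans hx.2 ha
  -- derivative of -log (h s)
  have hderiv : ∀ s, s ≤ T → HasDerivAt (fun r => -Real.log (h r)) (2 / α * y s) s := by
    intro s hs
    have d1 : HasDerivAt (fun r : ℝ => ω * (T - r)) (-ω) s := by
      simpa using ((hasDerivAt_id s).const_sub T).const_mul ω
    have d2 : HasDerivAt (fun r : ℝ => -ω * (T - r)) ω s := by
      simpa using ((hasDerivAt_id s).const_sub T).const_mul (-ω)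
    have d3 : HasDerivAt (fun r => Real.exp (ω * (T - r)))
        (Real.exp (ω * (T - s)) * (-ω)) s := d1.exp
    have d4 : HasDerivAt (fun r => u * Real.exp (-ω * (T - r)))
        (u * (Real.exp (-ω * (T - s)) * ω)) s := (d2.exp).const_mul u
    have dh : HasDerivAt h
        (Real.exp (ω * (T - s)) * (-ω) + u * (Real.exp (-ω * (T - s)) * ω)) s := d3.add d4
    have dlog := (dh.log (ne_of_gt (hpos s hs))).neg
    refine dlog.congr_deriv ?_; symm
    have hexp2 : Real.exp (-2 * ω * (T - s)) =
        Real.exp (-ω * (T - s)) * Real.exp (-ω * (T - s)) := by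
      rw [← Real.exp_add]; ring_nf
    have hP : Real.exp (ω * (T - s)) = (Real.exp (-ω * (T - s)))⁻¹ := by
      rw [← Real.exp_neg]; ring_nf
    have hQ : Real.exp (-ω * (T - s)) ≠ 0 := Real.exp_ne_zero _
    have hd1 : (1 : ℝ) + u * Real.exp (-2 * ω * (T - s)) ≠ 0 := ne_of_gt (hdenpos s hs)
    have hh : h s ≠ 0 := ne_of_gt (hpos s hs)
    rw [hy s, ← hωeq]
    simp only [hhdef] at hh ⊢
    rw [hexp2] at hd1 ⊢
    rw [hP] at hh ⊢
    generalize Real.exp (-ω * (T - s)) = Q at hQ hd1 hh ⊢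
    have hα' : α ≠ 0 := ne_of_gt hα
    have hd2 : 1 + u * Q ^ 2 ≠ 0 := by rw [sq]; exact hd1
    field_simp [hd2]
    have hI := mul_inv_cancel₀ hd2
    ring
  -- exp(-(2/α)(A s - A t)) = h s / h t
  have hstep : ∀ s ∈ Set.Icc t T, Real.exp (-(2 / α) * (A s - A t)) = h s / h t := by
    intro s hs
    have hsT : s ≤ T := hs.2
    have hts : t ≤ s := hs.1
    have e1 : A s - A t = ∫ r in t..s, y r := by
      have hadd := intervalIntegral.integral_add_adjacent_intervals
        (hyint t s htT hsT) (hyint s T hsT le_rfl)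
      rw [hA s, hA t]; linarith
    have e2 : (∫ r in t..s, 2 / α * y r) = -Real.log (h s) - -Real.log (h t) := by
      apply intervalIntegral.integral_eq_sub_of_hasDerivAt
      · intro x hx
        rw [Set.uIcc_of_le hts] at hx
        exact hderiv x (le_trans hx.2 hsT)
      · exact (hyint t s htT hsT).const_mul (2 / α)
    rw [intervalIntegral.integral_const_mul] at e2
    have e3 : -(2 / α) * (A s - A t) = Real.log (h s) - Real.log (h t) := by
      rw [e1]; linarith
    rw [e3, Real.exp_sub, Real.exp_log (hpos s hsT), Real.exp_log (hpos t htT)]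
  -- rewrite the integrand
  have e4 : (∫ s in t..T, Real.exp (-(2 / α) * (A s - A t))) = (∫ s in t..T, h s) / h t := by
    rw [← intervalIntegral.integral_div]
    apply intervalIntegral.integral_congr
    intro s hs
    rw [Set.uIcc_of_le htT] at hs
    exact hstep s hs
  -- compute ∫ h via FTC
  have e5 : (∫ s in t..T, h s) =
      ((u - 1) / ω + (1 / ω) * Real.exp (ω * (T - t)) - (u / ω) * Real.exp (-ω * (T - t))) := by
    have hH : ∀ s ∈ Set.uIcc t T, HasDerivAt
        (fun r => -(1 / ω) * Real.exp (ω * (T - r)) + (u / ω) * Real.exp (-ω * (T - r)))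
        (h s) s := by
      intro s _
      have d1 : HasDerivAt (fun r : ℝ => ω * (T - r)) (-ω) s := by
        simpa using ((hasDerivAt_id s).const_sub T).const_mul ω
      have d2 : HasDerivAt (fun r : ℝ => -ω * (T - r)) ω s := by
        simpa using ((hasDerivAt_id s).const_sub T).const_mul (-ω)
      have := ((d1.exp).const_mul (-(1 / ω))).add ((d2.exp).const_mul (u / ω))
      refine this.congr_deriv ?_
      show _ = Real.exp (ω * (T - s)) + u * Real.exp (-ω * (T - s))
      field_simp
    have hint : IntervalIntegrable h MeasureTheory.volume t T := by
      apply Continuous.intervalIntegrable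
      simp only [hhdef]
      fun_prop
    rw [intervalIntegral.integral_eq_sub_of_hasDerivAt hH hint]
    simp only [sub_self, mul_zero, neg_mul, neg_zero, Real.exp_zero, mul_one]
    ring
  rw [e4, e5, hinv]
  have hexp2 : Real.exp (-2 * ω * (T - t)) =
      Real.exp (-ω * (T - t)) * Real.exp (-ω * (T - t)) := by
    rw [← Real.exp_add]; ring_nf
  have hP : Real.exp (ω * (T - t)) = (Real.exp (-ω * (T - t)))⁻¹ := by
    rw [← Real.exp_neg]; ring_nf
  have hQ : Real.exp (-ω * (T - t)) ≠ 0 := Real.exp_ne_zero _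
  have hd1 : (1 : ℝ) + u * Real.exp (-2 * ω * (T - t)) ≠ 0 := ne_of_gt (hdenpos t htT)
  have hh : h t ≠ 0 := ne_of_gt (hpos t htT)
  simp only [hhdef] at hh ⊢
  rw [hexp2] at hd1 ⊢
  rw [hP] at hh ⊢
  generalize Real.exp (-ω * (T - t)) = Q at hQ hd1 hh ⊢
  have hω' : ω ≠ 0 := ne_of_gt hωpos
  have hd2 : 1 + u * Q ^ 2 ≠ 0 := by rw [sq]; exact hd1
  have hden3 : u * ω ^ 3 * Q ^ 3 + ω ^ 3 * Q ≠ 0 := by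
    have : u * ω ^ 3 * Q ^ 3 + ω ^ 3 * Q = ω ^ 3 * Q * (1 + u * Q ^ 2) := by ring
    rw [this]
    exact mul_ne_zero (mul_ne_zero (pow_ne_zero 3 hω') hQ) hd2
  field_simp [hd2, hden3]
  have hJ := mul_inv_cancel₀ hden3
  ring
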